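/- For every n-PDS CP=(P_1,...,P_n) communicating via a finite set Locks, all indices 1 <= i, j <= n with i != j, and all control states q_i of P_i and q_j of P_j: Reach(CP, q_i, q_j) holds if and only if Reach(CP_{i,j}, q_i, q_j) holds, where CP_{i,j} denotes the 2-PDS (P_i, P_j) communicating via Locks. -/

import Mathlib

/-- Transition labels of a pushdown system using locks. -/
inductive Label (L : Type) : Type where
  | state : Label L
  | push : Label L
  | pop : Label L
  | acq : L → Label L
  | rel : L → Label L

/-- A pushdown system (PDS) using the set of locks `L`, with control states `Q`
and stack alphabet `Γ`. -/
structure PDS (Q Γ L : Type) where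
  start : Q
  stateTr : Set (Q × Q)
  pushTr : Set (Q × (Q × Γ))
  popTr : Set ((Q × Γ) × Q)
  acqTr : Set (Q × (Q × L))
  relTr : Set ((Q × L) × Q)

/-- A local configuration of one thread: control state, stack and held locks. -/
abbrev LConf (Q Γ L : Type) : Type := Q × List Γ × Set L

/-- One labelled step of a single thread, in an environment where the locks in
`free` are free (held by no thread). -/
def PDS.LStep {Q Γ L : Type} (P : PDS Q Γ L) (free : Set L) (c : LConf Q Γ L) :
    Label L → LConf Q Γ L → Prop
  | .state, c' => (c.1, c'.1) ∈ P.stateTr ∧ c'.2.1 = c.2.1 ∧ c'.2.2 = c.2.2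
  | .push, c' => ∃ a, (c.1, (c'.1, a)) ∈ P.pushTr ∧ c'.2.1 = c.2.1 ++ [a] ∧ c'.2.2 = c.2.2
  | .pop, c' => ∃ a, ((c.1, a), c'.1) ∈ P.popTr ∧ c.2.1 = c'.2.1 ++ [a] ∧ c'.2.2 = c.2.2
  | .acq l, c' => (c.1, (c'.1, l)) ∈ P.acqTr ∧ l ∈ free ∧ c'.2.1 = c.2.1 ∧ c'.2.2 = c.2.2 ∪ {l}
  | .rel l, c' => ((c.1, l), c'.1) ∈ P.relTr ∧ l ∈ c.2.2 ∧ c'.2.1 = c.2.1 ∧ c'.2.2 = c.2.2 \ {l}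

/-- A configuration of an `n`-PDS: a local configuration for each thread. -/
abbrev NConf (n : ℕ) (Q Γ L : Type) : Type := Fin n → LConf Q Γ L

/-- The labelled transition relation of an `n`-PDS `P : Fin n → PDS Q Γ L`: in a step
labelled `(λ, i)` only the `i`-th component changes, and the free locks are those held
by no thread. -/
def NStep {n : ℕ} {Q Γ L : Type} (P : Fin n → PDS Q Γ L) (s : NConf n Q Γ L)
    (lab : Label L × Fin n) (t : NConf n Q Γ L) : Prop :=
  (∀ j, j ≠ lab.2 → t j = s j) ∧
  (P lab.2).LStep {l | ∀ j, l ∉ (s j).2.2} (s lab.2) lab.1 (t lab.2)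

/-- The initial configuration of an `n`-PDS. -/
def NInit {n : ℕ} {Q Γ L : Type} (P : Fin n → PDS Q Γ L) : NConf n Q Γ L :=
  fun i => ((P i).start, [], ∅)

/-- A (finite) computation `s 0 → s 1 → ⋯ → s len` of an `n`-PDS, starting from the
initial configuration; the transition from `s k` to `s (k+1)` has label `lab k`. -/
structure NComp {n : ℕ} {Q Γ L : Type} (P : Fin n → PDS Q Γ L) where
  len : ℕ
  s : ℕ → NConf n Q Γ L
  lab : ℕ → Label L × Fin n
  init : s 0 = NInit P
  step : ∀ k < len, NStep P (s k) (lab k) (s (k + 1))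

/-- `NReach P i j qi qj`: some computation of the `n`-PDS `P` ends in a configuration
whose `i`-th control state is `qi` and whose `j`-th control state is `qj`. -/
def NReach {n : ℕ} {Q Γ L : Type} (P : Fin n → PDS Q Γ L) (i j : Fin n)
    (qi qj : Q) : Prop :=
  ∃ c : NComp P, (c.s c.len i).1 = qi ∧ (c.s c.len j).1 = qj


/-- `LStep` is monotone in the set of free locks. -/
theorem PDS.LStep.mono {Q Γ L : Type} {P : PDS Q Γ L} {f f' : Set L} (hf : f ⊆ f')
    {c c' : LConf Q Γ L} {lab : Label L} (h : P.LStep f c lab c') :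
    P.LStep f' c lab c' := by
  cases lab with
  | state => exact h
  | push => exact h
  | pop => exact h
  | acq l => exact ⟨h.1, hf h.2.1, h.2.2⟩
  | rel l => exact h

/-- Every element of `Fin 2` is `0` or `1`. -/
theorem fin_two_cases : ∀ x : Fin 2, x = 0 ∨ x = 1 := by decide

/-- Extend a computation by one step. -/
def NComp.snoc {n : ℕ} {Q Γ L : Type} {P : Fin n → PDS Q Γ L} (c : NComp P)
    (lab : Label L × Fin n) (t : NConf n Q Γ L)
    (h : NStep P (c.s c.len) lab t) : NComp P where
  len := c.len + 1
  s := fun k => if k ≤ c.len then c.s k else t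
  lab := fun k => if k < c.len then c.lab k else lab
  init := by simp [c.init]
  step := by
    intro k hk
    show NStep P (if k ≤ c.len then c.s k else t)
        (if k < c.len then c.lab k else lab)
        (if k + 1 ≤ c.len then c.s (k + 1) else t)
    rcases Nat.lt_succ_iff_lt_or_eq.mp hk with h' | heq
    · rw [if_pos h'.le, if_pos h', if_pos (show k + 1 ≤ c.len from h')]
      exact c.step k h'
    · subst heq
      rw [if_pos le_rfl, if_neg (lt_irrefl _),
        if_neg (by omega : ¬ c.len + 1 ≤ c.len)]
      exact h

theorem snoc_end {n : ℕ} {Q Γ L : Type} {P : Fin n → PDS Q Γ L} (c : NComp P)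
    (lab : Label L × Fin n) (t : NConf n Q Γ L) (h : NStep P (c.s c.len) lab t) :
    (c.snoc lab t h).s (c.snoc lab t h).len = t := by
  show (if c.len + 1 ≤ c.len then c.s (c.len + 1) else t) = t
  rw [if_neg (by omega : ¬ c.len + 1 ≤ c.len)]

/-- Lift a configuration of the 2-PDS `(P i, P j)` to a configuration of the
`n`-PDS in which all other threads sit in their initial local configuration. -/
def liftConf {n : ℕ} {Q Γ L : Type} (P : Fin n → PDS Q Γ L) (i j : Fin n)
    (x : NConf 2 Q Γ L) : NConf n Q Γ L :=
  fun k => if k = i then x 0 else if k = j then x 1 else NInit P k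

theorem lift_nstep {n : ℕ} {Q Γ L : Type} {P : Fin n → PDS Q Γ L} {i j : Fin n}
    (hij : i ≠ j) {x y : NConf 2 Q Γ L} {lab : Label L × Fin 2}
    (h : NStep ![P i, P j] x lab y) :
    NStep P (liftConf P i j x) (lab.1, if lab.2 = 0 then i else j)
      (liftConf P i j y) := by
  obtain ⟨hframe, hstep⟩ := h
  have hfree : {l | ∀ k' : Fin 2, l ∉ (x k').2.2} ⊆
      {l | ∀ k : Fin n, l ∉ (liftConf P i j x k).2.2} := by
    intro l hl k
    by_cases hk : k = i
    · simpa [liftConf, hk] using hl 0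
    · by_cases hk' : k = j
      · simpa [liftConf, hk, hk', Ne.symm hij] using hl 1
      · simp [liftConf, hk, hk', NInit]
  rcases fin_two_cases lab.2 with h2 | h2
  · constructor
    · intro k hk
      rw [h2, if_pos rfl] at hk
      by_cases hk' : k = j
      · have h1 : y 1 = x 1 := hframe 1 (by rw [h2]; decide)
        simp [liftConf, hk', Ne.symm hij, h1]
      · simp [liftConf, hk, hk']
    · show (P (if lab.2 = 0 then i else j)).LStep
        {l | ∀ k : Fin n, l ∉ (liftConf P i j x k).2.2}
        (liftConf P i j x (if lab.2 = 0 then i else j)) lab.1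
        (liftConf P i j y (if lab.2 = 0 then i else j))
      rw [h2, if_pos rfl]
      have e1 : liftConf P i j x i = x 0 := by simp [liftConf]
      have e2 : liftConf P i j y i = y 0 := by simp [liftConf]
      rw [e1, e2]
      rw [h2] at hstep
      simp only [Matrix.cons_val_zero] at hstep
      exact hstep.mono hfree
  · constructor
    · intro k hk
      rw [h2, if_neg (by decide : ¬ (1 : Fin 2) = 0)] at hk
      by_cases hk' : k = i
      · have h0 : y 0 = x 0 := hframe 0 (by rw [h2]; decide)
        simp [liftConf, hk', h0]
      · simp [liftConf, hk, hk']
    · show (P (if lab.2 = 0 then i else j)).LStep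
        {l | ∀ k : Fin n, l ∉ (liftConf P i j x k).2.2}
        (liftConf P i j x (if lab.2 = 0 then i else j)) lab.1
        (liftConf P i j y (if lab.2 = 0 then i else j))
      rw [h2, if_neg (by decide : ¬ (1 : Fin 2) = 0)]
      have e1 : liftConf P i j x j = x 1 := by simp [liftConf, Ne.symm hij]
      have e2 : liftConf P i j y j = y 1 := by simp [liftConf, Ne.symm hij]
      rw [e1, e2]
      rw [h2] at hstep
      simp only [Matrix.cons_val_one, Matrix.head_cons] at hstep
      exact hstep.mono hfree

/-- For every `n`-PDS `P` communicating via a finite set of locks,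
indices `i ≠ j`, and control states `qi` of thread `i` and `qj` of thread `j`:
`Reach(P, qi, qj)` holds iff `Reach((P i, P j), qi, qj)` holds for the 2-PDS
consisting of threads `i` and `j` only. -/
theorem reach_iff_reach_pair
    {n : ℕ} {Q Γ L : Type} [Finite Q] [Finite Γ] [Finite L]
    (P : Fin n → PDS Q Γ L) (i j : Fin n) (hij : i ≠ j) (qi qj : Q) :
    NReach P i j qi qj ↔ NReach ![P i, P j] 0 1 qi qj := by
  constructor
  · rintro ⟨c, hi, hj⟩
    have key : ∀ m ≤ c.len, ∃ d : NComp ![P i, P j],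
        d.s d.len 0 = c.s m i ∧ d.s d.len 1 = c.s m j := by
      intro m hm
      induction m with
      | zero =>
        refine ⟨⟨0, fun _ => NInit ![P i, P j], fun _ => (Label.state, 0), rfl,
          by omega⟩, ?_, ?_⟩ <;> simp [c.init, NInit]
      | succ m ih =>
        obtain ⟨d, hd0, hd1⟩ := ih (Nat.le_of_succ_le hm)
        obtain ⟨hframe, hstep⟩ := c.step m (Nat.lt_of_succ_le hm)
        by_cases hki : (c.lab m).2 = i
        · -- step of thread i
          have hsub : {l | ∀ j', l ∉ (c.s m j').2.2} ⊆
              {l | ∀ j' : Fin 2, l ∉ (d.s d.len j').2.2} := by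
            intro l hl j'
            rcases fin_two_cases j' with rfl | rfl
            · rw [hd0]; exact hl i
            · rw [hd1]; exact hl j
          have hstep' : NStep ![P i, P j] (d.s d.len) ((c.lab m).1, 0)
              ![c.s (m+1) i, c.s (m+1) j] := by
            rw [hki] at hstep
            constructor
            · intro j' hj'
              rcases fin_two_cases j' with rfl | rfl
              · exact absurd rfl hj'
              · simp only [Matrix.cons_val_one, Matrix.head_cons, Matrix.cons_val_zero]
                rw [hd1, hframe j (by rw [hki]; exact hij.symm)]
            · simp only [Matrix.cons_val_zero]
              rw [hd0]
              exact hstep.mono hsub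
          refine ⟨d.snoc _ _ hstep', ?_, ?_⟩ <;> rw [snoc_end] <;> simp
        · by_cases hkj : (c.lab m).2 = j
          · -- step of thread j
            have hsub : {l | ∀ j', l ∉ (c.s m j').2.2} ⊆
                {l | ∀ j' : Fin 2, l ∉ (d.s d.len j').2.2} := by
              intro l hl j'
              rcases fin_two_cases j' with rfl | rfl
              · rw [hd0]; exact hl i
              · rw [hd1]; exact hl j
            have hstep' : NStep ![P i, P j] (d.s d.len) ((c.lab m).1, 1)
                ![c.s (m+1) i, c.s (m+1) j] := by
              rw [hkj] at hstep
              constructor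
              · intro j' hj'
                rcases fin_two_cases j' with rfl | rfl
                · simp only [Matrix.cons_val_zero]
                  rw [hd0, hframe i (by rw [hkj]; exact hij)]
                · exact absurd rfl hj'
              · simp only [Matrix.cons_val_one, Matrix.head_cons]
                rw [hd1]
                exact hstep.mono hsub
            refine ⟨d.snoc _ _ hstep', ?_, ?_⟩ <;> rw [snoc_end] <;> simp
          · -- step of another thread: components i, j unchanged
            exact ⟨d, by rw [hd0, hframe i (fun h => hki h.symm)],
              by rw [hd1, hframe j (fun h => hkj h.symm)]⟩
    obtain ⟨d, hd0, hd1⟩ := key c.len le_rfl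
    exact ⟨d, by rw [hd0, hi], by rw [hd1, hj]⟩
  · rintro ⟨d, hd0, hd1⟩
    refine ⟨⟨d.len, fun m => liftConf P i j (d.s m),
      fun m => ((d.lab m).1, if (d.lab m).2 = 0 then i else j), ?_, ?_⟩, ?_, ?_⟩
    · show liftConf P i j (d.s 0) = NInit P
      rw [d.init]
      funext k
      by_cases hk : k = i
      · simp [liftConf, hk, NInit]
      · by_cases hk' : k = j
        · simp [liftConf, hk', Ne.symm hij, NInit]
        · simp [liftConf, hk, hk']
    · intro m hm
      exact lift_nstep hij (d.step m hm)
    · simpa [liftConf] using hd0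
    · simpa [liftConf, Ne.symm hij] using hd1
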